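/- Let G be a group and H a subgroup of finite index. If a finite-dimensional complex representation (ρ, V) of G is semisimple as an H-representation (via restriction), then it is semisimple as a G-representation; conversely, if V is a semisimple G-representation then its restriction to H is a semisimple H-representation. -/

import Mathlib

/-!
STATEMENT 0 (char-0 finite-index Clifford theory, [hnb, Lemma 2.7]):
Let `G` be a group, `H ≤ G` of finite index, and `(ρ, V)` a finite-dimensional
complex representation of `G`.  Then `V` is semisimple as an `H`-representation
(via restriction along `H.subtype`) iff it is semisimple as a `G`-representation.
Semisimplicity of a representation is expressed as semisimplicity of the
associated module over the monoid algebra.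
-/

open Representation

namespace CliffordAux

variable {G : Type*} [Group G] {V : Type*} [AddCommGroup V] [Module ℂ V]

/-- invariance of a `ℂ`-subspace under a representation -/
def Invt (ρ : Representation ℂ G V) (p : Submodule ℂ V) : Prop :=
  ∀ g : G, ∀ x ∈ p, ρ g x ∈ p

variable (ρ : Representation ℂ G V)

lemma asAlgebraHom_mem {p : Submodule ℂ V} (hp : Invt ρ p) (r : MonoidAlgebra ℂ G)
    {x : V} (hx : x ∈ p) : ρ.asAlgebraHom r x ∈ p := by
  induction r using MonoidAlgebra.induction_linear with
  | zero => simp only [map_zero, LinearMap.zero_apply]; exact p.zero_mem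
  | add f g hf hg => rw [map_add]; exact p.add_mem hf hg
  | single g c =>
      rw [ρ.asAlgebraHom_single]
      exact p.smul_mem c (hp g x hx)

/-- an invariant `ℂ`-subspace as a submodule over the monoid algebra -/
def toMA {p : Submodule ℂ V} (hp : Invt ρ p) :
    Submodule (MonoidAlgebra ℂ G) ρ.asModule where
  carrier := {x : ρ.asModule | ρ.asModuleEquiv x ∈ p}
  add_mem' := fun {a b} ha hb => by
    simp only [Set.mem_setOf_eq, map_add] at *; exact p.add_mem ha hb
  zero_mem' := by simp only [Set.mem_setOf_eq, map_zero]; exact p.zero_mem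
  smul_mem' := fun r x hx => by
    simp only [Set.mem_setOf_eq, asModuleEquiv_map_smul] at *
    exact asAlgebraHom_mem ρ hp r hx

@[simp] lemma mem_toMA {p : Submodule ℂ V} (hp : Invt ρ p) (x : ρ.asModule) :
    x ∈ toMA ρ hp ↔ ρ.asModuleEquiv x ∈ p := Iff.rfl

/-- a monoid-algebra submodule as a `ℂ`-subspace -/
def ofMA (P : Submodule (MonoidAlgebra ℂ G) ρ.asModule) : Submodule ℂ V where
  carrier := {x : V | ρ.asModuleEquiv.symm x ∈ P}
  add_mem' := fun {a b} ha hb => by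
    simp only [Set.mem_setOf_eq, map_add] at *; exact P.add_mem ha hb
  zero_mem' := by simp only [Set.mem_setOf_eq, map_zero]; exact P.zero_mem
  smul_mem' := fun c x hx => by
    simp only [Set.mem_setOf_eq, asModuleEquiv_symm_map_smul] at *
    exact P.smul_mem _ hx

@[simp] lemma mem_ofMA (P : Submodule (MonoidAlgebra ℂ G) ρ.asModule) (x : V) :
    x ∈ ofMA ρ P ↔ ρ.asModuleEquiv.symm x ∈ P := Iff.rfl

lemma ofMA_invt (P : Submodule (MonoidAlgebra ℂ G) ρ.asModule) : Invt ρ (ofMA ρ P) := by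
  intro g x hx
  simp only [mem_ofMA, asModuleEquiv_symm_map_rho] at *
  exact P.smul_mem _ hx

lemma ofMA_le_iff {P Q : Submodule (MonoidAlgebra ℂ G) ρ.asModule} :
    ofMA ρ P ≤ ofMA ρ Q ↔ P ≤ Q := by
  constructor
  · intro h x hx
    have := h (x := ρ.asModuleEquiv x) (by simpa using hx)
    simpa using this
  · intro h x hx
    exact h hx

lemma ofMA_strictMono : StrictMono (ofMA ρ) := fun P Q h =>
  lt_iff_le_and_ne.2 ⟨(ofMA_le_iff ρ).2 h.le, fun e =>
    h.ne (le_antisymm h.le ((ofMA_le_iff ρ).1 e.ge))⟩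

lemma toMA_ofMA (P : Submodule (MonoidAlgebra ℂ G) ρ.asModule) :
    toMA ρ (ofMA_invt ρ P) = P := by
  ext x; simp

lemma ofMA_toMA {p : Submodule ℂ V} (hp : Invt ρ p) : ofMA ρ (toMA ρ hp) = p := by
  ext x; simp


lemma isCompl_toMA {p q : Submodule ℂ V} (hp : Invt ρ p) (hq : Invt ρ q)
    (h : IsCompl p q) : IsCompl (toMA ρ hp) (toMA ρ hq) := by
  constructor
  · rw [disjoint_iff, eq_bot_iff]
    intro x hx
    have h1 : ρ.asModuleEquiv x ∈ p := hx.1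
    have h2 : ρ.asModuleEquiv x ∈ q := hx.2
    have h0 : ρ.asModuleEquiv x = 0 := Submodule.disjoint_def.1 h.1 _ h1 h2
    have : x = 0 := by
      apply ρ.asModuleEquiv.injective; simpa using h0
    simp [this]
  · rw [codisjoint_iff, Submodule.eq_top_iff']
    intro x
    have : ρ.asModuleEquiv x ∈ p ⊔ q := by rw [codisjoint_iff.1 h.2]; trivial
    obtain ⟨y, hy, z, hz, hyz⟩ := Submodule.mem_sup.1 this
    refine Submodule.mem_sup.2 ⟨ρ.asModuleEquiv.symm y, by simpa using hy,
      ρ.asModuleEquiv.symm z, by simpa using hz, ?_⟩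
    apply ρ.asModuleEquiv.injective
    simpa using hyz

lemma isCompl_ofMA {P Q : Submodule (MonoidAlgebra ℂ G) ρ.asModule}
    (h : IsCompl P Q) : IsCompl (ofMA ρ P) (ofMA ρ Q) := by
  constructor
  · rw [disjoint_iff, eq_bot_iff]
    intro x hx
    have h0 : ρ.asModuleEquiv.symm x = 0 := by
      rw [← Submodule.mem_bot (R := MonoidAlgebra ℂ G), ← (disjoint_iff.1 h.1)]
      exact ⟨hx.1, hx.2⟩
    have : x = 0 := by apply ρ.asModuleEquiv.symm.injective; simpa using h0
    simp [this]
  · rw [codisjoint_iff, Submodule.eq_top_iff']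
    intro x
    have : ρ.asModuleEquiv.symm x ∈ P ⊔ Q := by rw [codisjoint_iff.1 h.2]; trivial
    obtain ⟨y, hy, z, hz, hyz⟩ := Submodule.mem_sup.1 this
    refine Submodule.mem_sup.2 ⟨ρ.asModuleEquiv y, by simpa using hy,
      ρ.asModuleEquiv z, by simpa using hz, ?_⟩
    apply ρ.asModuleEquiv.symm.injective
    simpa using hyz

theorem ss_iff_invtCompl :
    IsSemisimpleModule (MonoidAlgebra ℂ G) ρ.asModule ↔
      ∀ p : Submodule ℂ V, Invt ρ p → ∃ q, Invt ρ q ∧ IsCompl p q := by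
  constructor
  · intro h p hp
    obtain ⟨Q, hQ⟩ := h.exists_isCompl (toMA ρ hp)
    refine ⟨ofMA ρ Q, ofMA_invt ρ Q, ?_⟩
    have := isCompl_ofMA ρ hQ
    rwa [ofMA_toMA] at this
  · intro h
    rw [isSemisimpleModule_iff]
    constructor
    intro P
    obtain ⟨q, hq, hcq⟩ := h (ofMA ρ P) (ofMA_invt ρ P)
    refine ⟨toMA ρ hq, ?_⟩
    have := isCompl_toMA ρ (ofMA_invt ρ P) hq hcq
    rwa [toMA_ofMA] at this


/-- Averaging over cosets: if every `H`-invariant subspace has an `H`-invariant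
complement, the same holds for `G`-invariant subspaces. -/
lemma avg (H : Subgroup G) [H.FiniteIndex]
    (hss : ∀ p : Submodule ℂ V, Invt (ρ.comp H.subtype) p →
      ∃ q, Invt (ρ.comp H.subtype) q ∧ IsCompl p q) :
    ∀ p : Submodule ℂ V, Invt ρ p → ∃ q, Invt ρ q ∧ IsCompl p q := by
  intro p hp
  obtain ⟨q, hq, hpq⟩ := hss p (fun h x hx => hp (h : G) x hx)
  classical
  set π : V →ₗ[ℂ] V := p.subtype ∘ₗ (p.projectionOnto q hpq) with hπdef
  have hπ_mem : ∀ x, π x ∈ p := fun x => (p.projectionOnto q hpq x).2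
  have hπ_left : ∀ x ∈ p, π x = x := fun x hx => by
    simp only [hπdef, LinearMap.comp_apply, Submodule.coe_subtype]
    rw [Submodule.projectionOnto_apply_of_mem_left hpq hx]
  have hπ_right : ∀ x ∈ q, π x = 0 := fun x hx => by
    simp only [hπdef, LinearMap.comp_apply, Submodule.coe_subtype]
    rw [Submodule.projectionOnto_apply_of_mem_right hpq hx]; rfl
  have hρρ : ∀ (a b : G) (x : V), ρ a (ρ b x) = ρ (a * b) x := by
    intro a b x; rw [map_mul]; rfl
  have hπ_equiv : ∀ (h : H) (x : V), π (ρ (h : G) x) = ρ (h : G) (π x) := by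
    intro h x
    have hx : x ∈ p ⊔ q := by rw [codisjoint_iff.1 hpq.2]; trivial
    obtain ⟨y, hy, z, hz, rfl⟩ := Submodule.mem_sup.1 hx
    have h1 : ρ (h : G) y ∈ p := hp _ _ hy
    have h2 : ρ (h : G) z ∈ q := hq h _ hz
    simp only [map_add]
    rw [hπ_left _ h1, hπ_right _ h2, hπ_left _ hy, hπ_right _ hz]
    simp
  set φ : G → (V →ₗ[ℂ] V) := fun g => (ρ g) ∘ₗ π ∘ₗ (ρ g⁻¹) with hφdef
  have hφ_apply : ∀ g x, φ g x = ρ g (π (ρ g⁻¹ x)) := fun g x => rfl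
  have hφ_coset : ∀ a b : G, (QuotientGroup.leftRel H) a b → φ a = φ b := by
    intro a b hab
    rw [QuotientGroup.leftRel_apply] at hab
    ext x
    have e1 : ρ a⁻¹ x = ρ ((⟨a⁻¹ * b, hab⟩ : H) : G) (ρ b⁻¹ x) := by
      rw [hρρ]
      have : ((⟨a⁻¹ * b, hab⟩ : H) : G) * b⁻¹ = a⁻¹ := by
        show a⁻¹ * b * b⁻¹ = a⁻¹; group
      rw [this]
    calc φ a x = ρ a (π (ρ a⁻¹ x)) := rfl
      _ = ρ a (ρ ((⟨a⁻¹ * b, hab⟩ : H) : G) (π (ρ b⁻¹ x))) := by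
          rw [e1, hπ_equiv]
      _ = ρ b (π (ρ b⁻¹ x)) := by
          rw [hρρ]
          have : a * ((⟨a⁻¹ * b, hab⟩ : H) : G) = b := by
            show a * (a⁻¹ * b) = b; group
          rw [this]
      _ = φ b x := rfl
  set F : G ⧸ H → (V →ₗ[ℂ] V) := Quotient.lift φ hφ_coset with hFdef
  have hF_mk : ∀ g : G, F (QuotientGroup.mk g) = φ g := fun g => rfl
  haveI : Fintype (G ⧸ H) := Fintype.ofFinite _
  set n : ℕ := Fintype.card (G ⧸ H) with hndef
  have hn : (n : ℂ) ≠ 0 := by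
    simp only [hndef, Nat.cast_ne_zero]
    exact Fintype.card_ne_zero
  set PP : V →ₗ[ℂ] V := (n : ℂ)⁻¹ • ∑ c : G ⧸ H, F c with hPPdef
  have hPP_apply : ∀ x, PP x = (n : ℂ)⁻¹ • ∑ c : G ⧸ H, F c x := by
    intro x; simp [hPPdef, LinearMap.sum_apply]
  have hPP_mem : ∀ x, PP x ∈ p := by
    intro x
    rw [hPP_apply]
    refine p.smul_mem _ (Submodule.sum_mem _ fun c _ => ?_)
    induction c using Quotient.inductionOn with
    | h g => rw [hF_mk, hφ_apply]; exact hp g _ (hπ_mem _)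
  have hPP_left : ∀ x ∈ p, PP x = x := by
    intro x hx
    rw [hPP_apply]
    have hc : ∀ c : G ⧸ H, F c x = x := by
      intro c
      induction c using Quotient.inductionOn with
      | h g =>
        rw [hF_mk, hφ_apply, hπ_left _ (hp g⁻¹ x hx), hρρ, mul_inv_cancel, map_one]
        rfl
    rw [Finset.sum_congr rfl (fun c _ => hc c), Finset.sum_const, Finset.card_univ,
      ← hndef, ← Nat.cast_smul_eq_nsmul ℂ, smul_smul, inv_mul_cancel₀ hn, one_smul]
  have hPP_equiv : ∀ (g : G) (x : V), PP (ρ g x) = ρ g (PP x) := by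
    intro g x
    rw [hPP_apply, hPP_apply, map_smul, map_sum]
    congr 1
    refine Fintype.sum_bijective (fun c : G ⧸ H => g⁻¹ • c) (MulAction.bijective g⁻¹) _ _ fun c => ?_
    induction c using Quotient.inductionOn with
    | h a =>
      have hsm : ((fun c : G ⧸ H => g⁻¹ • c) (⟦a⟧ : G ⧸ H)) = QuotientGroup.mk (g⁻¹ * a) := by
        show g⁻¹ • (QuotientGroup.mk a : G ⧸ H) = QuotientGroup.mk (g⁻¹ * a)
        rw [MulAction.Quotient.smul_mk]
        rfl
      beta_reduce at hsm
      rw [hsm]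
      have hmk : (⟦a⟧ : G ⧸ H) = QuotientGroup.mk a := rfl
      rw [hmk, hF_mk, hF_mk, hφ_apply, hφ_apply]
      have e1 : ρ a⁻¹ (ρ g x) = ρ (a⁻¹ * g) x := hρρ _ _ _
      have e2 : ρ g (ρ (g⁻¹ * a) (π (ρ (g⁻¹ * a)⁻¹ x))) = ρ a (π (ρ (a⁻¹ * g) x)) := by
        rw [hρρ]
        have h3 : g * (g⁻¹ * a) = a := by group
        have h4 : (g⁻¹ * a)⁻¹ = a⁻¹ * g := by group
        rw [h3, h4]
      rw [e1, e2]
  refine ⟨LinearMap.ker PP, ?_, ?_⟩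
  · intro g x hx
    rw [LinearMap.mem_ker] at *
    rw [hPP_equiv, hx, map_zero]
  · constructor
    · rw [disjoint_iff, eq_bot_iff]
      intro x hx
      have := hPP_left x hx.1
      rw [LinearMap.mem_ker.1 hx.2] at this
      simp [← this]
    · rw [codisjoint_iff, Submodule.eq_top_iff']
      intro x
      refine Submodule.mem_sup.2 ⟨PP x, hPP_mem x, x - PP x, ?_, by abel⟩
      rw [LinearMap.mem_ker, map_sub, hPP_left _ (hPP_mem x), sub_self]


section Clifford

variable (N : Subgroup G) [N.Normal]

lemma mulApply (a b : G) (x : V) : ρ (a * b) x = ρ a (ρ b x) := by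
  rw [map_mul]; rfl

lemma applyInv (a : G) (x : V) : ρ a (ρ a⁻¹ x) = x := by
  rw [← mulApply, mul_inv_cancel]; simp

lemma toMA_le_iff {p q : Submodule ℂ V} (hp : Invt ρ p) (hq : Invt ρ q) :
    toMA ρ hp ≤ toMA ρ hq ↔ p ≤ q := by
  constructor
  · intro h x hx
    have := h (x := ρ.asModuleEquiv.symm x) (by simpa using hx)
    simpa using this
  · intro h x hx
    exact h hx

lemma ofMA_injective : Function.Injective (ofMA ρ) := fun P Q h =>
  le_antisymm ((ofMA_le_iff ρ).1 h.le) ((ofMA_le_iff ρ).1 h.ge)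

/-- conjugation of an invariant subspace -/
lemma conjInvt_invt (g : G) {p : Submodule ℂ V} (hp : Invt (ρ.comp N.subtype : Representation ℂ N V) p) :
    Invt (ρ.comp N.subtype : Representation ℂ N V) (p.map (ρ g)) := by
  intro n x hx
  obtain ⟨y, hy, rfl⟩ := hx
  show ρ (n : G) (ρ g y) ∈ _
  have hmem : g⁻¹ * (n : G) * g ∈ N := by
    have := ‹N.Normal›.conj_mem (n : G) n.2 g⁻¹
    simpa [mul_assoc] using this
  have heq : ρ (n : G) (ρ g y) = ρ g (ρ (g⁻¹ * (n : G) * g) y) := by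
    rw [← mulApply, ← mulApply]
    congr 1
    group
  rw [heq]
  exact Submodule.mem_map_of_mem (hp ⟨g⁻¹ * (n : G) * g, hmem⟩ y hy)

variable [FiniteDimensional ℂ V]

/-- conjugation of a monoid-algebra submodule by `g : G` -/
noncomputable def conjMA (g : G) (P : Submodule (MonoidAlgebra ℂ N) (Representation.asModule (ρ.comp N.subtype : Representation ℂ N V))) :
    Submodule (MonoidAlgebra ℂ N) (Representation.asModule (ρ.comp N.subtype : Representation ℂ N V)) :=
  toMA (ρ.comp N.subtype : Representation ℂ N V) (conjInvt_invt ρ N g (ofMA_invt (ρ.comp N.subtype : Representation ℂ N V) P))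

lemma ofMA_conjMA (g : G) (P : Submodule (MonoidAlgebra ℂ N) (Representation.asModule (ρ.comp N.subtype : Representation ℂ N V))) :
    ofMA (ρ.comp N.subtype : Representation ℂ N V) (conjMA ρ N g P) = (ofMA (ρ.comp N.subtype : Representation ℂ N V) P).map (ρ g) :=
  ofMA_toMA _ _

lemma map_map_inv (g : G) (p : Submodule ℂ V) :
    (p.map (ρ g⁻¹)).map (ρ g) = p := by
  ext x
  constructor
  · rintro ⟨y, ⟨z, hz, rfl⟩, rfl⟩
    rw [applyInv]
    exact hz
  · intro hx
    exact ⟨ρ g⁻¹ x, Submodule.mem_map_of_mem hx, applyInv ρ g x⟩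

lemma conjMA_conjMA (g : G) (P : Submodule (MonoidAlgebra ℂ N) (Representation.asModule (ρ.comp N.subtype : Representation ℂ N V))) :
    conjMA ρ N g (conjMA ρ N g⁻¹ P) = P := by
  apply ofMA_injective (ρ.comp N.subtype : Representation ℂ N V)
  rw [ofMA_conjMA, ofMA_conjMA, map_map_inv]

lemma conjMA_mono (g : G) {P Q : Submodule (MonoidAlgebra ℂ N) (Representation.asModule (ρ.comp N.subtype : Representation ℂ N V))}
    (h : P ≤ Q) : conjMA ρ N g P ≤ conjMA ρ N g Q := by
  rw [← ofMA_le_iff (ρ.comp N.subtype : Representation ℂ N V), ofMA_conjMA, ofMA_conjMA]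
  exact Submodule.map_mono ((ofMA_le_iff (ρ.comp N.subtype : Representation ℂ N V)).2 h)

lemma conjMA_inv_conjMA (g : G) (P : Submodule (MonoidAlgebra ℂ N) (Representation.asModule (ρ.comp N.subtype : Representation ℂ N V))) :
    conjMA ρ N g⁻¹ (conjMA ρ N g P) = P := by
  have := conjMA_conjMA ρ N g⁻¹ P
  rwa [inv_inv] at this

/-- conjugation as an order isomorphism on monoid-algebra submodules -/
noncomputable def conjIso (g : G) :
    Submodule (MonoidAlgebra ℂ N) (Representation.asModule (ρ.comp N.subtype : Representation ℂ N V)) ≃o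
      Submodule (MonoidAlgebra ℂ N) (Representation.asModule (ρ.comp N.subtype : Representation ℂ N V)) where
  toFun := conjMA ρ N g
  invFun := conjMA ρ N g⁻¹
  left_inv := fun P => conjMA_inv_conjMA ρ N g P
  right_inv := fun P => conjMA_conjMA ρ N g P
  map_rel_iff' := by
    intro P Q
    constructor
    · intro h
      have h' : conjMA ρ N g P ≤ conjMA ρ N g Q := h
      have h2 := conjMA_mono ρ N g⁻¹ h'
      rwa [conjMA_inv_conjMA, conjMA_inv_conjMA] at h2
    · intro h
      exact conjMA_mono ρ N g h

lemma clifford_normal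
    (hG : IsSemisimpleModule (MonoidAlgebra ℂ G) ρ.asModule) :
    IsSemisimpleModule (MonoidAlgebra ℂ N) (Representation.asModule (ρ.comp N.subtype : Representation ℂ N V)) := by
  classical
  haveI : WellFoundedLT (Submodule (MonoidAlgebra ℂ N) (Representation.asModule (ρ.comp N.subtype : Representation ℂ N V))) :=
    (ofMA_strictMono (ρ.comp N.subtype : Representation ℂ N V)).wellFoundedLT
  haveI : IsAtomic (Submodule (MonoidAlgebra ℂ N) (Representation.asModule (ρ.comp N.subtype : Representation ℂ N V))) :=
    isAtomic_of_orderBot_wellFounded_lt (IsWellFounded.wf)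
  set S : Submodule (MonoidAlgebra ℂ N) (Representation.asModule (ρ.comp N.subtype : Representation ℂ N V)) :=
    sSup {P | IsAtom P} with hSdef
  have hconjS : ∀ g : G, conjMA ρ N g S = S := by
    intro g
    have himg : (conjIso ρ N g) '' {P | IsAtom P} = {P | IsAtom P} := by
      ext P
      constructor
      · rintro ⟨Q, hQ, rfl⟩
        exact ((conjIso ρ N g).isAtom_iff Q).2 hQ
      · intro hP
        exact ⟨(conjIso ρ N g).symm P, ((conjIso ρ N g).symm.isAtom_iff P).2 hP,
          (conjIso ρ N g).apply_symm_apply P⟩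
    show conjIso ρ N g S = S
    rw [hSdef, OrderIso.map_sSup, ← sSup_image, himg]
  have hGinvt : Invt ρ (ofMA (ρ.comp N.subtype : Representation ℂ N V) S) := by
    intro g x hx
    have h1 : ρ g x ∈ (ofMA (ρ.comp N.subtype : Representation ℂ N V) S).map (ρ g) := Submodule.mem_map_of_mem hx
    rwa [← ofMA_conjMA, hconjS] at h1
  set SA : Submodule (MonoidAlgebra ℂ G) ρ.asModule := toMA ρ hGinvt with hSAdef
  obtain ⟨C, hC⟩ := hG.exists_isCompl SA
  have hCbot : C = ⊥ := by
    by_contra hne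
    obtain ⟨x, hxC, hx0⟩ := C.ne_bot_iff.1 hne
    have hCinvt : Invt (ρ.comp N.subtype : Representation ℂ N V) (ofMA ρ C) := fun n y hy => ofMA_invt ρ C (n : G) y hy
    set CB : Submodule (MonoidAlgebra ℂ N) (Representation.asModule (ρ.comp N.subtype : Representation ℂ N V)) := toMA (ρ.comp N.subtype : Representation ℂ N V) hCinvt with hCBdef
    have hCBne : CB ≠ ⊥ := by
      rw [Submodule.ne_bot_iff]
      refine ⟨(Representation.asModuleEquiv (ρ.comp N.subtype : Representation ℂ N V)).symm (ρ.asModuleEquiv x), ?_, ?_⟩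
      · show (Representation.asModuleEquiv (ρ.comp N.subtype : Representation ℂ N V)) ((Representation.asModuleEquiv (ρ.comp N.subtype : Representation ℂ N V)).symm (ρ.asModuleEquiv x)) ∈ ofMA ρ C
        simpa using hxC
      · intro h
        apply hx0
        apply ρ.asModuleEquiv.injective
        apply_fun (Representation.asModuleEquiv (ρ.comp N.subtype : Representation ℂ N V)).symm using (Representation.asModuleEquiv (ρ.comp N.subtype : Representation ℂ N V)).symm.injective
        simpa using h
    rcases eq_bot_or_exists_atom_le CB with h | ⟨a, ha, haCB⟩
    · exact hCBne h
    obtain ⟨z, hza, hz0⟩ := a.ne_bot_iff.1 ha.1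
    have hzS : z ∈ S := le_sSup (show a ∈ {P | IsAtom P} from ha) hza
    have hzCB : z ∈ CB := haCB hza
    have h1 : ρ.asModuleEquiv.symm ((Representation.asModuleEquiv (ρ.comp N.subtype : Representation ℂ N V)) z) ∈ SA := by
      show ρ.asModuleEquiv (ρ.asModuleEquiv.symm ((Representation.asModuleEquiv (ρ.comp N.subtype : Representation ℂ N V)) z)) ∈ ofMA (ρ.comp N.subtype : Representation ℂ N V) S
      simpa using hzS
    have h2 : ρ.asModuleEquiv.symm ((Representation.asModuleEquiv (ρ.comp N.subtype : Representation ℂ N V)) z) ∈ C := by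
      have h3 := hzCB
      rw [hCBdef, mem_toMA] at h3
      exact h3
    have h0 := Submodule.disjoint_def.1 hC.1 _ h1 h2
    apply hz0
    apply (Representation.asModuleEquiv (ρ.comp N.subtype : Representation ℂ N V)).injective
    apply_fun ρ.asModuleEquiv.symm using ρ.asModuleEquiv.symm.injective
    simpa using h0
  have hSA_top : SA = ⊤ := by
    have h4 := codisjoint_iff.1 hC.2
    rwa [hCbot, sup_bot_eq] at h4
  have hS_top : S = ⊤ := by
    rw [Submodule.eq_top_iff']
    intro y
    have h5 : ρ.asModuleEquiv.symm ((Representation.asModuleEquiv (ρ.comp N.subtype : Representation ℂ N V)) y) ∈ SA := hSA_top ▸ Submodule.mem_top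
    rw [hSAdef, mem_toMA] at h5
    simpa using h5
  apply IsSemisimpleModule.of_sSup_simples_eq_top
  have hset : {m : Submodule (MonoidAlgebra ℂ N) (Representation.asModule (ρ.comp N.subtype : Representation ℂ N V)) | IsSimpleModule (MonoidAlgebra ℂ N) m} =
      {P | IsAtom P} := by
    ext P; exact isSimpleModule_iff_isAtom
  rw [hset, ← hSdef, hS_top]

end Clifford

end CliffordAux

theorem finite_index_restriction_semisimple_iff
    {G : Type*} [Group G] (H : Subgroup G) [H.FiniteIndex]
    (V : Type*) [AddCommGroup V] [Module ℂ V] [FiniteDimensional ℂ V]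
    (ρ : Representation ℂ G V) :
    IsSemisimpleModule (MonoidAlgebra ℂ H)
      (Representation.asModule (ρ.comp H.subtype : Representation ℂ H V)) ↔
    IsSemisimpleModule (MonoidAlgebra ℂ G) ρ.asModule := by
  classical
  constructor
  · intro hH
    exact (CliffordAux.ss_iff_invtCompl ρ).2
      (CliffordAux.avg ρ H
        ((CliffordAux.ss_iff_invtCompl (ρ.comp H.subtype : Representation ℂ H V)).1 hH))
  · intro hG
    set N : Subgroup G := H.normalCore with hNdef
    set σ : Representation ℂ H V := (ρ.comp H.subtype : Representation ℂ H V) with hσdef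
    set K : Subgroup H := N.subgroupOf H with hKdef
    have hN : IsSemisimpleModule (MonoidAlgebra ℂ N)
        (Representation.asModule (ρ.comp N.subtype : Representation ℂ N V)) :=
      CliffordAux.clifford_normal ρ N hG
    have hNc := (CliffordAux.ss_iff_invtCompl (ρ.comp N.subtype : Representation ℂ N V)).1 hN
    have hKc : ∀ p : Submodule ℂ V, CliffordAux.Invt (σ.comp K.subtype) p →
        ∃ q, CliffordAux.Invt (σ.comp K.subtype) q ∧ IsCompl p q := by
      intro p hp
      obtain ⟨q, hq, hc⟩ := hNc p (fun n x hx => by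
        have hnH : (n : G) ∈ H := H.normalCore_le n.2
        have hnK : (⟨(n : G), hnH⟩ : H) ∈ K := by
          rw [hKdef, Subgroup.mem_subgroupOf]
          exact n.2
        exact hp ⟨⟨(n : G), hnH⟩, hnK⟩ x hx)
      refine ⟨q, ?_, hc⟩
      intro k x hx
      exact hq ⟨((k : H) : G), Subgroup.mem_subgroupOf.1 k.2⟩ x hx
    exact (CliffordAux.ss_iff_invtCompl σ).2 (CliffordAux.avg σ K hKc)
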